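/- Let X = A ∪ B (disjoint), with a ∈ A and x, y ∈ X. Define S₁(δ) = ∑_{{a₁,a₂} ⊆ A} Z_δ(a₁,a₂) (scaled Z). Then the coefficient of δ(x,y) in S₁(δ) is: -C(|B|,2) if both x,y ∈ A; (1/2)(|A|-1)(|B|-1) if exactly one of x,y is in A; and -C(|A|,2) if neither is in A. (Here n = |A| + |B| and |A| ≥ 2.) -/

import Mathlib

open Finset
open scoped Classical

/-- `w_δ(ij:kl) = (1/2)(δ(i,k)+δ(i,l)+δ(j,k)+δ(j,l)) - δ(i,j) - δ(k,l)`. -/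
noncomputable def njw {X : Type*} (δ : X → X → ℝ) (i j k l : X) : ℝ :=
  (δ i k + δ i l + δ j k + δ j l) / 2 - δ i j - δ k l

/-- The scaled Z-criterion `Z_δ(i,j) = ∑_{{k,l} ⊆ X\{i,j}} w_δ(ij:kl)`. -/
noncomputable def njZ {X : Type*} [Fintype X] [DecidableEq X]
    (δ : X → X → ℝ) (i j : X) : ℝ :=
  (1 / 2) * ∑ k ∈ (Finset.univ.erase i).erase j,
    ∑ l ∈ ((Finset.univ.erase i).erase j).erase k, njw δ i j k l

/-- `S₁(δ) = ∑_{{a₁,a₂} ⊆ A} Z_δ(a₁,a₂)` (sum over unordered pairs of `A`). -/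
noncomputable def njS1 {X : Type*} [Fintype X] [DecidableEq X]
    (A : Finset X) (δ : X → X → ℝ) : ℝ :=
  (1 / 2) * ∑ a₁ ∈ A, ∑ a₂ ∈ A.erase a₁, njZ δ a₁ a₂


section helpers
variable {X : Type*} [Fintype X] [DecidableEq X] (δ : X → X → ℝ)

lemma sum_erase2 {i j : X} (hij : i ≠ j) (f : X → ℝ) :
    ∑ k ∈ (Finset.univ.erase i).erase j, f k = (∑ k, f k) - f i - f j := by
  rw [Finset.sum_erase_eq_sub (by simp [hij.symm]),
    Finset.sum_erase_eq_sub (Finset.mem_univ i)]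

lemma njZ_closed (hsym : ∀ x y, δ x y = δ y x) (hdiag : ∀ x, δ x x = 0)
    {i j : X} (hij : i ≠ j) :
    njZ δ i j = (1/2) * (((Fintype.card X : ℝ) - 1) * ((∑ k, δ i k) + (∑ k, δ j k))
      - ((Fintype.card X : ℝ) - 2) * ((Fintype.card X : ℝ) - 1) * δ i j
      - ∑ k, ∑ l, δ k l) := by
  classical
  set U := (Finset.univ.erase i).erase j with hU
  have hm : (U.card : ℝ) = (Fintype.card X : ℝ) - 2 := by
    have hjmem : j ∈ Finset.univ.erase i := by simp [hij.symm]
    rw [hU, Finset.card_erase_of_mem hjmem, Finset.card_erase_of_mem (Finset.mem_univ i)]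
    have h2 : 2 ≤ Fintype.card X := by
      have : ({i, j} : Finset X).card ≤ Fintype.card X := Finset.card_le_univ _
      simpa [Finset.card_insert_of_notMem, hij] using this
    rw [Finset.card_univ]
    have h3 : Fintype.card X - 1 - 1 = Fintype.card X - 2 := by omega
    rw [h3, Nat.cast_sub h2]
    norm_num
  -- inner sum over erased k
  have hinner : ∀ k ∈ U, ∑ l ∈ U.erase k, njw δ i j k l
      = (∑ l ∈ U, njw δ i j k l) - (δ i k + δ j k - δ i j) := by
    intro k hk
    rw [Finset.sum_erase_eq_sub hk]
    have : njw δ i j k k = δ i k + δ j k - δ i j := by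
      simp [njw, hdiag]; ring
    rw [this]
  have hrow : ∀ k : X, ∑ l ∈ U, njw δ i j k l
      = ((U.card : ℝ) * δ i k + (∑ l ∈ U, δ i l) + (U.card : ℝ) * δ j k
          + (∑ l ∈ U, δ j l)) / 2 - (U.card : ℝ) * δ i j - ∑ l ∈ U, δ k l := by
    intro k
    simp only [njw, Finset.sum_sub_distrib]
    rw [← Finset.sum_div]
    simp only [Finset.sum_add_distrib, Finset.sum_const, nsmul_eq_mul]
  have hSi : ∑ l ∈ U, δ i l = (∑ l, δ i l) - δ i j := by
    rw [hU, sum_erase2 hij]; simp [hdiag]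
  have hSj : ∑ l ∈ U, δ j l = (∑ l, δ j l) - δ i j := by
    rw [hU, sum_erase2 hij]; simp [hdiag, hsym i j]
  have hQ : ∑ k ∈ U, ∑ l ∈ U, δ k l
      = (∑ k, ∑ l, δ k l) - 2 * (∑ l, δ i l) - 2 * (∑ l, δ j l) + 2 * δ i j := by
    have hcol : ∀ k, ∑ l ∈ U, δ k l = (∑ l, δ k l) - δ k i - δ k j := fun k => by
      rw [hU, sum_erase2 hij]
    rw [Finset.sum_congr rfl (fun k _ => hcol k)]
    simp only [Finset.sum_sub_distrib]
    rw [hU, sum_erase2 hij (fun k => ∑ l, δ k l)]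
    have h1 : ∑ k ∈ U, δ k i = (∑ l, δ i l) - δ i j := by
      rw [hU, sum_erase2 hij (fun k => δ k i)]
      rw [show (∑ k, δ k i) = ∑ k, δ i k from Finset.sum_congr rfl (fun k _ => hsym k i)]
      rw [hdiag, hsym j i]
      ring
    have h2 : ∑ k ∈ U, δ k j = (∑ l, δ j l) - δ i j := by
      rw [hU, sum_erase2 hij (fun k => δ k j)]
      rw [show (∑ k, δ k j) = ∑ k, δ j k from Finset.sum_congr rfl (fun k _ => hsym k j)]
      rw [hdiag, hsym i j]
      ring
    rw [hU] at h1 h2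
    rw [h1, h2]
    ring
  rw [njZ]
  rw [Finset.sum_congr rfl hinner]
  simp only [Finset.sum_sub_distrib]
  rw [Finset.sum_congr rfl (fun k _ => hrow k)]
  simp only [Finset.sum_sub_distrib]
  rw [← Finset.sum_div]
  simp only [Finset.sum_add_distrib, Finset.sum_const, nsmul_eq_mul, ← Finset.mul_sum]
  rw [hQ, hSi, hSj, hm]
  ring
end helpers


/-- for the partition `X = A ∪ B` (`B = Aᶜ`), the coefficient of `δ(x,y)`
in `S₁(δ) = ∑_{{a₁,a₂} ⊆ A} Z_δ(a₁,a₂)` is `-C(|B|,2)` if `x,y ∈ A`,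
`(1/2)(|A|-1)(|B|-1)` if exactly one of `x,y` lies in `A`, and `-C(|A|,2)` otherwise. -/
theorem statement_14 {X : Type*} [Fintype X] [DecidableEq X]
    (A : Finset X) (hA : 2 ≤ A.card)
    (δ : X → X → ℝ)
    (hsym : ∀ x y, δ x y = δ y x) (hdiag : ∀ x, δ x x = 0) :
    njS1 A δ =
      (1 / 2) * ∑ x : X, ∑ y ∈ Finset.univ.erase x,
        (if x ∈ A ∧ y ∈ A then -((Aᶜ.card.choose 2 : ℝ))
         else if x ∈ A ∨ y ∈ A
           then (1 / 2) * ((A.card : ℝ) - 1) * ((Aᶜ.card : ℝ) - 1)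
           else -((A.card.choose 2 : ℝ))) * δ x y := by
  classical
  set R : X → ℝ := fun i => ∑ k, δ i k with hR
  set T : ℝ := ∑ k, ∑ l, δ k l with hT
  set SAA : ℝ := ∑ x ∈ A, ∑ y ∈ A, δ x y with hSAA
  set SAB : ℝ := ∑ x ∈ A, ∑ y ∈ Aᶜ, δ x y with hSAB
  set SBB : ℝ := ∑ x ∈ Aᶜ, ∑ y ∈ Aᶜ, δ x y with hSBB
  have hn : (Fintype.card X : ℝ) = (A.card : ℝ) + (Aᶜ.card : ℝ) := by
    rw [← Finset.card_add_card_compl A]; push_cast; ring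
  have hSBA : ∑ x ∈ Aᶜ, ∑ y ∈ A, δ x y = SAB := by
    rw [Finset.sum_comm, hSAB]
    exact Finset.sum_congr rfl (fun x _ => Finset.sum_congr rfl (fun y _ => hsym y x))
  have hRA : ∑ a ∈ A, R a = SAA + SAB := by
    rw [hSAA, hSAB, ← Finset.sum_add_distrib]
    exact Finset.sum_congr rfl (fun a _ => (Finset.sum_add_sum_compl A (δ a)).symm)
  have hTsplit : T = SAA + 2 * SAB + SBB := by
    rw [hT, ← Finset.sum_add_sum_compl A (fun k => ∑ l, δ k l)]
    have h1 : ∀ k : X, ∑ l, δ k l = (∑ l ∈ A, δ k l) + ∑ l ∈ Aᶜ, δ k l :=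
      fun k => (Finset.sum_add_sum_compl A (δ k)).symm
    rw [Finset.sum_congr rfl (fun k _ => h1 k), Finset.sum_congr rfl (fun k (_ : k ∈ Aᶜ) => h1 k)]
    simp only [Finset.sum_add_distrib]
    rw [hSBA, ← hSAA, ← hSAB, ← hSBB]
    ring
  -- LHS evaluation
  have hstep : ∀ a ∈ A, ∑ b ∈ A.erase a, njZ δ a b
      = (∑ b ∈ A, (1/2) * (((Fintype.card X : ℝ) - 1) * (R a + R b)
          - ((Fintype.card X : ℝ) - 2) * ((Fintype.card X : ℝ) - 1) * δ a b - T))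
        - (1/2) * (2 * ((Fintype.card X : ℝ) - 1) * R a - T) := by
    intro a ha
    have h1 : ∀ b ∈ A.erase a, njZ δ a b
        = (1/2) * (((Fintype.card X : ℝ) - 1) * (R a + R b)
            - ((Fintype.card X : ℝ) - 2) * ((Fintype.card X : ℝ) - 1) * δ a b - T) := by
      intro b hb
      exact njZ_closed δ hsym hdiag (Finset.ne_of_mem_erase hb).symm
    rw [Finset.sum_congr rfl h1, Finset.sum_erase_eq_sub ha, hdiag]
    congr 1
    ring
  have hE1 : ∑ a ∈ A, ∑ b ∈ A, (1/2) * (((Fintype.card X : ℝ) - 1) * (R a + R b)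
        - ((Fintype.card X : ℝ) - 2) * ((Fintype.card X : ℝ) - 1) * δ a b - T)
      = (1/2) * (2 * (A.card : ℝ) * ((Fintype.card X : ℝ) - 1) * (SAA + SAB)
          - ((Fintype.card X : ℝ) - 2) * ((Fintype.card X : ℝ) - 1) * SAA
          - (A.card : ℝ) * (A.card : ℝ) * T) := by
    simp only [mul_sub, mul_add, Finset.sum_sub_distrib, Finset.sum_add_distrib,
      ← Finset.mul_sum, Finset.sum_const, nsmul_eq_mul, ← hSAA]
    rw [hRA]
    ring
  have hE2 : ∑ a ∈ A, (1/2) * (2 * ((Fintype.card X : ℝ) - 1) * R a - T)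
      = (1/2) * (2 * ((Fintype.card X : ℝ) - 1) * (SAA + SAB) - (A.card : ℝ) * T) := by
    simp only [mul_sub, Finset.sum_sub_distrib, ← Finset.mul_sum, Finset.sum_const,
      nsmul_eq_mul]
    rw [hRA]
  have hL : njS1 A δ
      = (1/4) * (2 * ((A.card : ℝ) - 1) * ((Fintype.card X : ℝ) - 1) * (SAA + SAB)
          - ((Fintype.card X : ℝ) - 2) * ((Fintype.card X : ℝ) - 1) * SAA
          - (A.card : ℝ) * ((A.card : ℝ) - 1) * T) := by
    rw [njS1, Finset.sum_congr rfl hstep, Finset.sum_sub_distrib, hE1, hE2]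
    ring
  -- RHS evaluation
  set c : X → X → ℝ := fun x y =>
    (if x ∈ A ∧ y ∈ A then -((Aᶜ.card.choose 2 : ℝ))
     else if x ∈ A ∨ y ∈ A
       then (1 / 2) * ((A.card : ℝ) - 1) * ((Aᶜ.card : ℝ) - 1)
       else -((A.card.choose 2 : ℝ))) with hc
  have herase : ∀ x : X, ∑ y ∈ Finset.univ.erase x, c x y * δ x y
      = ∑ y, c x y * δ x y := by
    intro x
    rw [Finset.sum_erase_eq_sub (Finset.mem_univ x), hdiag, mul_zero, sub_zero]
  have hsplit : ∀ x : X, ∑ y, c x y * δ x y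
      = (∑ y ∈ A, c x y * δ x y) + ∑ y ∈ Aᶜ, c x y * δ x y :=
    fun x => (Finset.sum_add_sum_compl A _).symm
  have hRHS : ∑ x : X, ∑ y ∈ Finset.univ.erase x, c x y * δ x y
      = -((Aᶜ.card.choose 2 : ℝ)) * SAA
        + 2 * ((1 / 2) * ((A.card : ℝ) - 1) * ((Aᶜ.card : ℝ) - 1)) * SAB
        + -((A.card.choose 2 : ℝ)) * SBB := by
    rw [Finset.sum_congr rfl (fun x _ => herase x),
      ← Finset.sum_add_sum_compl A (fun x => ∑ y, c x y * δ x y),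
      Finset.sum_congr rfl (fun x (_ : x ∈ A) => hsplit x),
      Finset.sum_congr rfl (fun x (_ : x ∈ Aᶜ) => hsplit x)]
    simp only [Finset.sum_add_distrib]
    have hAA : ∑ x ∈ A, ∑ y ∈ A, c x y * δ x y = -((Aᶜ.card.choose 2 : ℝ)) * SAA := by
      rw [hSAA, Finset.mul_sum]
      refine Finset.sum_congr rfl (fun x hx => ?_)
      rw [Finset.mul_sum]
      refine Finset.sum_congr rfl (fun y hy => ?_)
      rw [hc]; simp only [if_pos (And.intro hx hy)]
    have hABc : ∑ x ∈ A, ∑ y ∈ Aᶜ, c x y * δ x y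
        = ((1 / 2) * ((A.card : ℝ) - 1) * ((Aᶜ.card : ℝ) - 1)) * SAB := by
      rw [hSAB, Finset.mul_sum]
      refine Finset.sum_congr rfl (fun x hx => ?_)
      rw [Finset.mul_sum]
      refine Finset.sum_congr rfl (fun y hy => ?_)
      have hy' : y ∉ A := Finset.mem_compl.mp hy
      rw [hc]
      simp only [if_neg (fun h : x ∈ A ∧ y ∈ A => hy' h.2), if_pos (Or.inl hx)]
    have hBAc : ∑ x ∈ Aᶜ, ∑ y ∈ A, c x y * δ x y
        = ((1 / 2) * ((A.card : ℝ) - 1) * ((Aᶜ.card : ℝ) - 1)) * SAB := by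
      rw [← hSBA, Finset.mul_sum]
      refine Finset.sum_congr rfl (fun x hx => ?_)
      rw [Finset.mul_sum]
      refine Finset.sum_congr rfl (fun y hy => ?_)
      have hx' : x ∉ A := Finset.mem_compl.mp hx
      rw [hc]
      simp only [if_neg (fun h : x ∈ A ∧ y ∈ A => hx' h.1), if_pos (Or.inr hy)]
    have hBBc : ∑ x ∈ Aᶜ, ∑ y ∈ Aᶜ, c x y * δ x y = -((A.card.choose 2 : ℝ)) * SBB := by
      rw [hSBB, Finset.mul_sum]
      refine Finset.sum_congr rfl (fun x hx => ?_)
      rw [Finset.mul_sum]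
      refine Finset.sum_congr rfl (fun y hy => ?_)
      have hx' : x ∉ A := Finset.mem_compl.mp hx
      have hy' : y ∉ A := Finset.mem_compl.mp hy
      rw [hc]
      simp only [if_neg (fun h : x ∈ A ∧ y ∈ A => hx' h.1),
        if_neg (fun h : x ∈ A ∨ y ∈ A => h.elim hx' hy')]
    rw [hAA, hABc, hBAc, hBBc]
    ring
  rw [hL, hRHS, hTsplit, Nat.cast_choose_two, Nat.cast_choose_two, hn]
  ring
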